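/- Let (X,ρ) be a proper locally compact non-compact metric space, let H and K be Banach X-modules whose structural morphisms of C₀(X) are restrictions of unital continuous algebra morphisms φ ↦ φ(Q) of C_b(X) into B(H), respectively B(K), and let S ∈ B(H,K). If there is a constant C such that for every bounded real Lipschitz function θ on X one has ‖S∘θ(Q) − θ(Q)∘S‖ ≤ C·Lip(θ), then S is decay preserving. -/

import Mathlib

open ContinuousLinearMap

noncomputable section

variable {H K : Type*}

/-- `M` is the multiplier algebra of a Banach module structure on `H`: a non-degenerate
norm-closed subalgebra of `B(H)` possessing a bounded approximate unit. -/
structure IsBanachModule (H : Type*) [NormedAddCommGroup H] [NormedSpace ℂ H]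
    (M : Set (H →L[ℂ] H)) : Prop where
  zero_mem : (0 : H →L[ℂ] H) ∈ M
  add_mem : ∀ {A B : H →L[ℂ] H}, A ∈ M → B ∈ M → A + B ∈ M
  smul_mem : ∀ (c : ℂ) {A : H →L[ℂ] H}, A ∈ M → c • A ∈ M
  mul_mem : ∀ {A B : H →L[ℂ] H}, A ∈ M → B ∈ M → A.comp B ∈ M
  isClosed : IsClosed M
  nondegenerate : Dense (↑(Submodule.span ℂ {u : H | ∃ A ∈ M, ∃ v : H, u = A v}) : Set H)
  approx_unit : ∃ C : ℝ, ∀ ε > (0 : ℝ), ∀ F : Finset (H →L[ℂ] H), ↑F ⊆ M →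
    ∃ J ∈ M, ‖J‖ ≤ C ∧ ∀ A ∈ F, ‖J.comp A - A‖ ≤ ε ∧ ‖A.comp J - A‖ ≤ ε

/-- A Hilbert module: a Banach module on a Hilbert space whose multiplier algebra is a
C*-algebra of operators (i.e. is moreover closed under adjoints). -/
structure IsHilbertModule (H : Type*) [NormedAddCommGroup H] [InnerProductSpace ℂ H]
    [CompleteSpace H] (M : Set (H →L[ℂ] H)) extends IsBanachModule H M : Prop where
  star_mem : ∀ {A : H →L[ℂ] H}, A ∈ M → ContinuousLinearMap.adjoint A ∈ M

/-- `B₀ˡ(H,K)`: the closed linear span of the operators `A ∘ T` with `A` in the multiplier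
algebra of `K` and `T ∈ B(H,K)` (operators left vanishing at infinity). -/
def B0l [NormedAddCommGroup H] [NormedSpace ℂ H] [NormedAddCommGroup K] [NormedSpace ℂ K]
    (MK : Set (K →L[ℂ] K)) : Set (H →L[ℂ] K) :=
  closure (↑(Submodule.span ℂ
    {S : H →L[ℂ] K | ∃ A ∈ MK, ∃ T : H →L[ℂ] K, S = A.comp T}) : Set (H →L[ℂ] K))

/-- `B₀ʳ(H,K)`: the closed linear span of the operators `T ∘ A` with `A` in the multiplier
algebra of `H` and `T ∈ B(H,K)` (operators right vanishing at infinity). -/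
def B0r [NormedAddCommGroup H] [NormedSpace ℂ H] [NormedAddCommGroup K] [NormedSpace ℂ K]
    (MH : Set (H →L[ℂ] H)) : Set (H →L[ℂ] K) :=
  closure (↑(Submodule.span ℂ
    {S : H →L[ℂ] K | ∃ A ∈ MH, ∃ T : H →L[ℂ] K, S = T.comp A}) : Set (H →L[ℂ] K))

/-- `S ∈ B(H,K)` is left decay preserving. -/
def LeftDecayPreserving [NormedAddCommGroup H] [NormedSpace ℂ H] [NormedAddCommGroup K]
    [NormedSpace ℂ K] (MH : Set (H →L[ℂ] H)) (MK : Set (K →L[ℂ] K))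
    (S : H →L[ℂ] K) : Prop :=
  ∀ A ∈ MH, S.comp A ∈ B0l MK

/-- `S ∈ B(H,K)` is right decay preserving. -/
def RightDecayPreserving [NormedAddCommGroup H] [NormedSpace ℂ H] [NormedAddCommGroup K]
    [NormedSpace ℂ K] (MH : Set (H →L[ℂ] H)) (MK : Set (K →L[ℂ] K))
    (S : H →L[ℂ] K) : Prop :=
  ∀ A ∈ MK, A.comp S ∈ B0r MH

open scoped BoundedContinuousFunction NNReal

/-- A Banach `X`-module whose structural morphism of `C₀(X)` is (the restriction of) a
unital continuous algebra morphism `φ ↦ φ(Q)` of `C_b(X)` into `B(H)`; nondegeneracy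
refers to the action of the functions vanishing at infinity. -/
structure BanachXModuleCb (X : Type*) [TopologicalSpace X]
    (H : Type*) [NormedAddCommGroup H] [NormedSpace ℂ H] [CompleteSpace H] where
  Q : (X →ᵇ ℂ) →ₐ[ℂ] (H →L[ℂ] H)
  continuous_Q : Continuous Q
  nondegenerate : Dense
    (↑(Submodule.span ℂ {u : H | ∃ φ : X →ᵇ ℂ,
      Filter.Tendsto ⇑φ (Filter.cocompact X) (nhds 0) ∧ ∃ v : H, u = Q φ v}) : Set H)

/-- The multiplier algebra: the norm closure of `{φ(Q) : φ ∈ C₀(X)}`. -/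
def BanachXModuleCb.mult {X : Type*} [TopologicalSpace X] {H : Type*} [NormedAddCommGroup H]
    [NormedSpace ℂ H] [CompleteSpace H] (B : BanachXModuleCb X H) : Set (H →L[ℂ] H) :=
  closure {A : H →L[ℂ] H | ∃ φ : X →ᵇ ℂ,
    Filter.Tendsto ⇑φ (Filter.cocompact X) (nhds 0) ∧ A = B.Q φ}


section Aux

lemma exists_cutoff {X : Type*} [MetricSpace X] [ProperSpace X] (x₀ : X) (r : ℝ≥0)
    (hr : 0 < r) :
    ∃ θ : X →ᵇ ℂ, (∀ x, (θ x).im = 0) ∧ LipschitzWith r⁻¹ ⇑θ ∧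
      Filter.Tendsto ⇑θ (Filter.cocompact X) (nhds 0) ∧
      (∀ x, dist x x₀ ≤ r → θ x = 1) ∧ (∀ x, ‖1 - θ x‖ ≤ 1) := by
  set g : X → ℝ := fun x => max 0 (min 1 (2 - dist x x₀ / r)) with hg
  have hg0 : ∀ x, 0 ≤ g x := fun x => le_max_left _ _
  have hg1 : ∀ x, g x ≤ 1 := fun x => max_le zero_le_one (min_le_left _ _)
  have hgcont : Continuous g := by fun_prop
  have hglip : LipschitzWith r⁻¹ g := by
    apply LipschitzWith.of_dist_le_mul
    intro x y
    rw [Real.dist_eq]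
    have h1 : |g x - g y| ≤ |min 1 (2 - dist x x₀ / r) - min 1 (2 - dist y x₀ / r)| := by
      refine (abs_max_sub_max_le_max _ _ _ _).trans ?_
      simp
    have h2 : |min 1 (2 - dist x x₀ / r) - min 1 (2 - dist y x₀ / r)|
        ≤ |(2 - dist x x₀ / r) - (2 - dist y x₀ / r)| := by
      refine (abs_min_sub_min_le_max _ _ _ _).trans ?_
      simp
    have h3 : |(2 - dist x x₀ / r) - (2 - dist y x₀ / r)| = |dist x x₀ - dist y x₀| / r := by
      have hrpos : (0:ℝ) < r := hr
      rw [show 2 - dist x x₀/(r:ℝ) - (2 - dist y x₀/r) = (dist y x₀ - dist x x₀)/r from by ring,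
        abs_div, abs_of_pos hrpos, abs_sub_comm]
    have h4 : |dist x x₀ - dist y x₀| ≤ dist x y := abs_dist_sub_le x y x₀
    have hrpos : (0:ℝ) < r := hr
    calc |g x - g y| ≤ |dist x x₀ - dist y x₀| / r := by rw [← h3]; exact h1.trans h2
      _ ≤ dist x y / r := by gcongr
      _ = ((r⁻¹ : ℝ≥0):ℝ) * dist x y := by rw [NNReal.coe_inv]; ring
  set θ : X →ᵇ ℂ := BoundedContinuousFunction.ofNormedAddCommGroup (fun x => (g x : ℂ))
    (Complex.continuous_ofReal.comp hgcont) 1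
    (fun x => by simp [Complex.norm_real, abs_le]; constructor <;> [linarith [hg0 x]; exact hg1 x])
    with hθ
  refine ⟨θ, ?_, ?_, ?_, ?_, ?_⟩
  · intro x; simp [hθ]
  · have : LipschitzWith (1 * r⁻¹) (fun x => ((g x : ℝ) : ℂ)) :=
      Complex.isometry_ofReal.lipschitz.comp hglip
    simpa [hθ] using this
  · have hev : (fun x => ((g x : ℝ) : ℂ)) =ᶠ[Filter.cocompact X] 0 := by
      have hmem : (Metric.closedBall x₀ (2 * r))ᶜ ∈ Filter.cocompact X := by
        rw [Filter.mem_cocompact]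
        exact ⟨Metric.closedBall x₀ (2 * r), isCompact_closedBall _ _, le_refl _⟩
      filter_upwards [hmem] with x hx
      have hd : (2:ℝ) * r < dist x x₀ := by
        simpa [Metric.mem_closedBall, not_le] using hx
      have hrpos : (0:ℝ) < r := hr
      have : 2 - dist x x₀ / r ≤ 0 := by
        rw [sub_nonpos, le_div_iff₀ hrpos]
        linarith
      have : g x = 0 := by
        apply max_eq_left
        exact le_trans (min_le_right _ _) this
      simp [this]
    exact (Filter.tendsto_congr' hev).mpr tendsto_const_nhds
  · intro x hx
    have hrpos : (0:ℝ) < r := hr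
    have h5 : (1:ℝ) ≤ 2 - dist x x₀ / r := by
      have : dist x x₀ / r ≤ 1 := by rw [div_le_one hrpos]; exact hx
      linarith
    have h6 : g x = 1 := by
      rw [hg]
      simp only [min_eq_left h5]
      exact max_eq_right zero_le_one
    simp only [hθ, BoundedContinuousFunction.coe_ofNormedAddCommGroup]
    rw [h6]; norm_num
  · intro x
    rw [hθ]
    simp only [BoundedContinuousFunction.coe_ofNormedAddCommGroup]
    rw [show ((1:ℂ) - (g x : ℂ)) = ((1 - g x : ℝ) : ℂ) by push_cast; ring,
      Complex.norm_real, Real.norm_eq_abs, abs_le]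
    constructor <;> [linarith [hg1 x]; linarith [hg0 x]]

variable {X : Type*} [MetricSpace X] [ProperSpace X] [NoncompactSpace X]
  [NormedAddCommGroup H] [NormedSpace ℂ H] [CompleteSpace H]
  [NormedAddCommGroup K] [NormedSpace ℂ K] [CompleteSpace K]

set_option maxHeartbeats 1000000 in
lemma left_core (BH : BanachXModuleCb X H) (BK : BanachXModuleCb X K) (S : H →L[ℂ] K)
    (C : ℝ) (hC : ∀ φ : X →ᵇ ℂ, (∀ x, (φ x).im = 0) →
      ∀ L : ℝ≥0, LipschitzWith L ⇑φ →
        ‖S.comp (BH.Q φ) - (BK.Q φ).comp S‖ ≤ C * L)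
    (φ : X →ᵇ ℂ) (hφ : Filter.Tendsto ⇑φ (Filter.cocompact X) (nhds 0)) :
    S.comp (BH.Q φ) ∈ B0l BK.mult := by
  have hne : Nonempty X := Filter.nonempty_of_neBot (Filter.cocompact X)
  obtain ⟨x₀⟩ := hne
  set QHc : (X →ᵇ ℂ) →L[ℂ] (H →L[ℂ] H) := ⟨BH.Q.toLinearMap, BH.continuous_Q⟩ with hQHc
  have hQH : ∀ ψ : X →ᵇ ℂ, ‖BH.Q ψ‖ ≤ ‖QHc‖ * ‖ψ‖ := fun ψ => QHc.le_opNorm ψ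
  rw [B0l, Metric.mem_closure_iff]
  intro ε hε
  set δ := ε / (2 * (‖S‖ * ‖QHc‖ + 1)) with hδ
  have hδpos : 0 < δ := by positivity
  have hev : ∀ᶠ x in Filter.cocompact X, dist (φ x) 0 < δ := Metric.tendsto_nhds.mp hφ δ hδpos
  rw [Filter.eventually_iff, Filter.mem_cocompact] at hev
  obtain ⟨Kc, hKc, hKsub⟩ := hev
  obtain ⟨r₀, hr₀⟩ := hKc.isBounded.subset_closedBall x₀
  obtain ⟨n, hn⟩ := exists_nat_gt (max r₀ (2 * |C| * (‖BH.Q φ‖ + 1) / ε))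
  have hnr₀ : r₀ < (n : ℝ) := lt_of_le_of_lt (le_max_left _ _) hn
  have hnC : 2 * |C| * (‖BH.Q φ‖ + 1) / ε < (n : ℝ) := lt_of_le_of_lt (le_max_right _ _) hn
  have hnpos : (0:ℝ) < n := lt_of_le_of_lt (by positivity) hnC
  set r : ℝ≥0 := (n : ℝ≥0) with hr
  have hrpos : 0 < r := by
    rw [hr]; exact_mod_cast Nat.pos_of_ne_zero (by rintro rfl; simp at hnpos)
  obtain ⟨θ, hθim, hθlip, hθ0, hθ1, hθb⟩ := exists_cutoff x₀ r hrpos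
  have hcm : ‖S.comp (BH.Q θ) - (BK.Q θ).comp S‖ ≤ C * ((r⁻¹ : ℝ≥0) : ℝ) :=
    hC θ hθim r⁻¹ hθlip
  refine ⟨(BK.Q θ).comp (S.comp (BH.Q φ)), ?_, ?_⟩
  · exact Submodule.subset_span ⟨BK.Q θ, subset_closure ⟨θ, hθ0, rfl⟩, S.comp (BH.Q φ), rfl⟩
  · rw [dist_eq_norm]
    have hid : S.comp (BH.Q φ) - (BK.Q θ).comp (S.comp (BH.Q φ))
        = (S.comp (BH.Q θ) - (BK.Q θ).comp S).comp (BH.Q φ)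
          + S.comp (BH.Q (φ - θ * φ)) := by
      have h1 : BH.Q (φ - θ * φ) = BH.Q φ - (BH.Q θ).comp (BH.Q φ) := by
        rw [map_sub, map_mul, ContinuousLinearMap.mul_def]
      rw [h1]; ext u
      simp only [ContinuousLinearMap.comp_apply, ContinuousLinearMap.sub_apply,
        ContinuousLinearMap.add_apply, map_sub]
      abel
    rw [hid]
    have hsmall : ‖φ - θ * φ‖ ≤ δ := by
      apply BoundedContinuousFunction.norm_le hδpos.le |>.mpr
      intro x
      have hx : (φ - θ * φ) x = (1 - θ x) * φ x := by
        simp [BoundedContinuousFunction.coe_sub, BoundedContinuousFunction.coe_mul]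
        ring
      rw [hx, norm_mul]
      by_cases hdx : dist x x₀ ≤ r
      · rw [hθ1 x hdx]; simp [hδpos.le]
      · have hxK : x ∉ Kc := by
          intro hxK
          exact hdx (le_trans (hr₀ hxK) (by push_cast [hr]; exact hnr₀.le))
        have hφx : ‖φ x‖ < δ := by
          have := hKsub (by simpa using hxK)
          simpa [dist_zero_right] using this
        calc ‖1 - θ x‖ * ‖φ x‖ ≤ 1 * δ := by
              apply mul_le_mul (hθb x) hφx.le (norm_nonneg _) zero_le_one
          _ = δ := one_mul δ
    have hX1 : ‖(S.comp (BH.Q θ) - (BK.Q θ).comp S).comp (BH.Q φ)‖ < ε / 2 := by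
      have h1 : ‖(S.comp (BH.Q θ) - (BK.Q θ).comp S).comp (BH.Q φ)‖
          ≤ C * ((r⁻¹ : ℝ≥0) : ℝ) * ‖BH.Q φ‖ :=
        le_trans (ContinuousLinearMap.opNorm_comp_le _ _)
          (mul_le_mul_of_nonneg_right hcm (norm_nonneg _))
      have hco : ((r⁻¹ : ℝ≥0) : ℝ) = ((n:ℝ))⁻¹ := by
        rw [hr]; push_cast; rfl
      rw [hco] at h1
      refine lt_of_le_of_lt h1 ?_
      have hQn : (0:ℝ) ≤ ‖BH.Q φ‖ := norm_nonneg _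
      have key : 2 * |C| * (‖BH.Q φ‖ + 1) < (n:ℝ) * ε := by
        rwa [div_lt_iff₀ hε] at hnC
      have h2 : C * (n:ℝ)⁻¹ * ‖BH.Q φ‖ ≤ |C| * (‖BH.Q φ‖ + 1) / n := by
        rw [div_eq_mul_inv]
        have : C * (n:ℝ)⁻¹ * ‖BH.Q φ‖ = C * ‖BH.Q φ‖ * (n:ℝ)⁻¹ := by ring
        rw [this]
        apply mul_le_mul_of_nonneg_right _ (by positivity)
        calc C * ‖BH.Q φ‖ ≤ |C| * ‖BH.Q φ‖ :=
              mul_le_mul_of_nonneg_right (le_abs_self C) hQn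
          _ ≤ |C| * (‖BH.Q φ‖ + 1) :=
              mul_le_mul_of_nonneg_left (by linarith) (abs_nonneg C)
      refine lt_of_le_of_lt h2 ?_
      rw [div_lt_iff₀ hnpos]
      have hkey2 : |C| * (‖BH.Q φ‖ + 1) * 2 < (n:ℝ) * ε := by
        calc |C| * (‖BH.Q φ‖ + 1) * 2 = 2 * |C| * (‖BH.Q φ‖ + 1) := by ring
          _ < (n:ℝ) * ε := key
      linarith
    have hX2 : ‖S.comp (BH.Q (φ - θ * φ))‖ < ε / 2 := by
      have h1 : ‖S.comp (BH.Q (φ - θ * φ))‖ ≤ ‖S‖ * (‖QHc‖ * ‖φ - θ * φ‖) :=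
        le_trans (ContinuousLinearMap.opNorm_comp_le _ _)
          (mul_le_mul_of_nonneg_left (hQH _) (norm_nonneg _))
      have h2 : ‖S‖ * (‖QHc‖ * ‖φ - θ * φ‖) ≤ ‖S‖ * (‖QHc‖ * δ) :=
        mul_le_mul_of_nonneg_left
          (mul_le_mul_of_nonneg_left hsmall (ContinuousLinearMap.opNorm_nonneg QHc)) (norm_nonneg S)
      refine lt_of_le_of_lt (h1.trans h2) ?_
      rw [hδ]
      rw [div_eq_mul_inv, show (2 * (‖S‖ * ‖QHc‖ + 1))⁻¹ = (‖S‖ * ‖QHc‖ + 1)⁻¹ * 2⁻¹ from by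
        rw [mul_inv]; ring]
      have hpos : (0:ℝ) < ‖S‖ * ‖QHc‖ + 1 := by positivity
      calc ‖S‖ * (‖QHc‖ * (ε * ((‖S‖ * ‖QHc‖ + 1)⁻¹ * 2⁻¹)))
          = (‖S‖ * ‖QHc‖) * (‖S‖ * ‖QHc‖ + 1)⁻¹ * (ε / 2) := by ring
        _ < 1 * (ε / 2) := by
            apply mul_lt_mul_of_pos_right _ (by positivity)
            rw [mul_inv_lt_iff₀ hpos]
            linarith
        _ = ε / 2 := one_mul _
    calc ‖(S.comp (BH.Q θ) - (BK.Q θ).comp S).comp (BH.Q φ) + S.comp (BH.Q (φ - θ * φ))‖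
        ≤ ‖(S.comp (BH.Q θ) - (BK.Q θ).comp S).comp (BH.Q φ)‖
          + ‖S.comp (BH.Q (φ - θ * φ))‖ := norm_add_le _ _
      _ < ε / 2 + ε / 2 := add_lt_add hX1 hX2
      _ = ε := add_halves ε

set_option maxHeartbeats 1000000 in
lemma right_core (BH : BanachXModuleCb X H) (BK : BanachXModuleCb X K) (S : H →L[ℂ] K)
    (C : ℝ) (hC : ∀ φ : X →ᵇ ℂ, (∀ x, (φ x).im = 0) →
      ∀ L : ℝ≥0, LipschitzWith L ⇑φ →
        ‖S.comp (BH.Q φ) - (BK.Q φ).comp S‖ ≤ C * L)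
    (φ : X →ᵇ ℂ) (hφ : Filter.Tendsto ⇑φ (Filter.cocompact X) (nhds 0)) :
    (BK.Q φ).comp S ∈ B0r BH.mult := by
  have hne : Nonempty X := Filter.nonempty_of_neBot (Filter.cocompact X)
  obtain ⟨x₀⟩ := hne
  set QKc : (X →ᵇ ℂ) →L[ℂ] (K →L[ℂ] K) := ⟨BK.Q.toLinearMap, BK.continuous_Q⟩ with hQKc
  have hQK : ∀ ψ : X →ᵇ ℂ, ‖BK.Q ψ‖ ≤ ‖QKc‖ * ‖ψ‖ := fun ψ => QKc.le_opNorm ψ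
  rw [B0r, Metric.mem_closure_iff]
  intro ε hε
  set δ := ε / (2 * (‖S‖ * ‖QKc‖ + 1)) with hδ
  have hδpos : 0 < δ := by positivity
  have hev : ∀ᶠ x in Filter.cocompact X, dist (φ x) 0 < δ := Metric.tendsto_nhds.mp hφ δ hδpos
  rw [Filter.eventually_iff, Filter.mem_cocompact] at hev
  obtain ⟨Kc, hKc, hKsub⟩ := hev
  obtain ⟨r₀, hr₀⟩ := hKc.isBounded.subset_closedBall x₀
  obtain ⟨n, hn⟩ := exists_nat_gt (max r₀ (2 * |C| * (‖BK.Q φ‖ + 1) / ε))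
  have hnr₀ : r₀ < (n : ℝ) := lt_of_le_of_lt (le_max_left _ _) hn
  have hnC : 2 * |C| * (‖BK.Q φ‖ + 1) / ε < (n : ℝ) := lt_of_le_of_lt (le_max_right _ _) hn
  have hnpos : (0:ℝ) < n := lt_of_le_of_lt (by positivity) hnC
  set r : ℝ≥0 := (n : ℝ≥0) with hr
  have hrpos : 0 < r := by
    rw [hr]; exact_mod_cast Nat.pos_of_ne_zero (by rintro rfl; simp at hnpos)
  obtain ⟨θ, hθim, hθlip, hθ0, hθ1, hθb⟩ := exists_cutoff x₀ r hrpos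
  have hcm : ‖S.comp (BH.Q θ) - (BK.Q θ).comp S‖ ≤ C * ((r⁻¹ : ℝ≥0) : ℝ) :=
    hC θ hθim r⁻¹ hθlip
  refine ⟨((BK.Q φ).comp S).comp (BH.Q θ), ?_, ?_⟩
  · exact Submodule.subset_span ⟨BH.Q θ, subset_closure ⟨θ, hθ0, rfl⟩, (BK.Q φ).comp S, rfl⟩
  · rw [dist_eq_norm]
    have hid : (BK.Q φ).comp S - ((BK.Q φ).comp S).comp (BH.Q θ)
        = (BK.Q (φ - φ * θ)).comp S
          - (BK.Q φ).comp (S.comp (BH.Q θ) - (BK.Q θ).comp S) := by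
      have h1 : BK.Q (φ - φ * θ) = BK.Q φ - (BK.Q φ).comp (BK.Q θ) := by
        rw [map_sub, map_mul, ContinuousLinearMap.mul_def]
      rw [h1]; ext u
      simp only [ContinuousLinearMap.comp_apply, ContinuousLinearMap.sub_apply, map_sub]
      abel
    rw [hid]
    have hsmall : ‖φ - φ * θ‖ ≤ δ := by
      apply BoundedContinuousFunction.norm_le hδpos.le |>.mpr
      intro x
      have hx : (φ - φ * θ) x = φ x * (1 - θ x) := by
        simp [BoundedContinuousFunction.coe_sub, BoundedContinuousFunction.coe_mul]
        ring
      rw [hx, norm_mul]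
      by_cases hdx : dist x x₀ ≤ r
      · rw [hθ1 x hdx]; simp [hδpos.le]
      · have hxK : x ∉ Kc := by
          intro hxK
          exact hdx (le_trans (hr₀ hxK) (by push_cast [hr]; exact hnr₀.le))
        have hφx : ‖φ x‖ < δ := by
          have := hKsub (by simpa using hxK)
          simpa [dist_zero_right] using this
        calc ‖φ x‖ * ‖1 - θ x‖ ≤ δ * 1 := by
              apply mul_le_mul hφx.le (hθb x) (norm_nonneg _) hδpos.le
          _ = δ := mul_one δ
    have hX1 : ‖(BK.Q φ).comp (S.comp (BH.Q θ) - (BK.Q θ).comp S)‖ < ε / 2 := by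
      have h1 : ‖(BK.Q φ).comp (S.comp (BH.Q θ) - (BK.Q θ).comp S)‖
          ≤ ‖BK.Q φ‖ * (C * ((r⁻¹ : ℝ≥0) : ℝ)) :=
        le_trans (ContinuousLinearMap.opNorm_comp_le _ _)
          (mul_le_mul_of_nonneg_left hcm (norm_nonneg _))
      have hco : ((r⁻¹ : ℝ≥0) : ℝ) = ((n:ℝ))⁻¹ := by
        rw [hr]; push_cast; rfl
      rw [hco] at h1
      refine lt_of_le_of_lt h1 ?_
      have hQn : (0:ℝ) ≤ ‖BK.Q φ‖ := norm_nonneg _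
      have key : 2 * |C| * (‖BK.Q φ‖ + 1) < (n:ℝ) * ε := by
        rwa [div_lt_iff₀ hε] at hnC
      have h2 : ‖BK.Q φ‖ * (C * (n:ℝ)⁻¹) ≤ |C| * (‖BK.Q φ‖ + 1) / n := by
        rw [div_eq_mul_inv]
        have he : ‖BK.Q φ‖ * (C * (n:ℝ)⁻¹) = C * ‖BK.Q φ‖ * (n:ℝ)⁻¹ := by ring
        rw [he]
        apply mul_le_mul_of_nonneg_right _ (by positivity)
        calc C * ‖BK.Q φ‖ ≤ |C| * ‖BK.Q φ‖ :=
              mul_le_mul_of_nonneg_right (le_abs_self C) hQn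
          _ ≤ |C| * (‖BK.Q φ‖ + 1) :=
              mul_le_mul_of_nonneg_left (by linarith) (abs_nonneg C)
      refine lt_of_le_of_lt h2 ?_
      rw [div_lt_iff₀ hnpos]
      have hkey2 : |C| * (‖BK.Q φ‖ + 1) * 2 < (n:ℝ) * ε := by
        calc |C| * (‖BK.Q φ‖ + 1) * 2 = 2 * |C| * (‖BK.Q φ‖ + 1) := by ring
          _ < (n:ℝ) * ε := key
      linarith
    have hX2 : ‖(BK.Q (φ - φ * θ)).comp S‖ < ε / 2 := by
      have h1 : ‖(BK.Q (φ - φ * θ)).comp S‖ ≤ ‖QKc‖ * ‖φ - φ * θ‖ * ‖S‖ :=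
        le_trans (ContinuousLinearMap.opNorm_comp_le _ _)
          (mul_le_mul_of_nonneg_right (hQK _) (norm_nonneg _))
      have h2 : ‖QKc‖ * ‖φ - φ * θ‖ * ‖S‖ ≤ ‖QKc‖ * δ * ‖S‖ :=
        mul_le_mul_of_nonneg_right
          (mul_le_mul_of_nonneg_left hsmall (ContinuousLinearMap.opNorm_nonneg QKc))
          (norm_nonneg S)
      refine lt_of_le_of_lt (h1.trans h2) ?_
      rw [hδ]
      rw [div_eq_mul_inv, show (2 * (‖S‖ * ‖QKc‖ + 1))⁻¹ = (‖S‖ * ‖QKc‖ + 1)⁻¹ * 2⁻¹ from by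
        rw [mul_inv]; ring]
      have hpos : (0:ℝ) < ‖S‖ * ‖QKc‖ + 1 := by positivity
      calc ‖QKc‖ * (ε * ((‖S‖ * ‖QKc‖ + 1)⁻¹ * 2⁻¹)) * ‖S‖
          = (‖S‖ * ‖QKc‖) * (‖S‖ * ‖QKc‖ + 1)⁻¹ * (ε / 2) := by ring
        _ < 1 * (ε / 2) := by
            apply mul_lt_mul_of_pos_right _ (by positivity)
            rw [mul_inv_lt_iff₀ hpos]
            linarith
        _ = ε / 2 := one_mul _
    calc ‖(BK.Q (φ - φ * θ)).comp S - (BK.Q φ).comp (S.comp (BH.Q θ) - (BK.Q θ).comp S)‖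
        ≤ ‖(BK.Q (φ - φ * θ)).comp S‖
          + ‖(BK.Q φ).comp (S.comp (BH.Q θ) - (BK.Q θ).comp S)‖ := norm_sub_le _ _
      _ < ε / 2 + ε / 2 := add_lt_add hX2 hX1
      _ = ε := add_halves ε

end Aux

/-- Let `(X,ρ)` be a proper locally compact non-compact metric space and
`H`, `K` Banach `X`-modules whose structural morphisms extend to `C_b(X)`.  If there is a
constant `C` such that `‖S φ(Q) − φ(Q) S‖ ≤ C Lip(φ)` for every bounded real Lipschitz
function `φ` on `X`, then `S` is decay preserving. -/
theorem stmt3 {X : Type*} [MetricSpace X] [ProperSpace X] [NoncompactSpace X]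
    {H K : Type*} [NormedAddCommGroup H] [NormedSpace ℂ H] [CompleteSpace H]
    [NormedAddCommGroup K] [NormedSpace ℂ K] [CompleteSpace K]
    (BH : BanachXModuleCb X H) (BK : BanachXModuleCb X K)
    (S : H →L[ℂ] K)
    (hcomm : ∃ C : ℝ, ∀ φ : X →ᵇ ℂ, (∀ x, (φ x).im = 0) →
      ∀ L : ℝ≥0, LipschitzWith L ⇑φ →
        ‖S.comp (BH.Q φ) - (BK.Q φ).comp S‖ ≤ C * L) :
    LeftDecayPreserving BH.mult BK.mult S ∧ RightDecayPreserving BH.mult BK.mult S := by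
  obtain ⟨C, hC⟩ := hcomm
  constructor
  · intro A hA
    have hcont : Continuous fun B : H →L[ℂ] H => S.comp B := by
      have he : (fun B : H →L[ℂ] H => S.comp B)
          = ⇑((ContinuousLinearMap.compL ℂ H H K) S) := by
        funext B; simp
      rw [he]; exact ContinuousLinearMap.continuous _
    have hcl : IsClosed {B : H →L[ℂ] H | S.comp B ∈ B0l (H := H) (K := K) BK.mult} := by
      have he : {B : H →L[ℂ] H | S.comp B ∈ B0l (H := H) (K := K) BK.mult}
          = (fun B : H →L[ℂ] H => S.comp B) ⁻¹' (B0l BK.mult) := rfl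
      rw [he]
      refine IsClosed.preimage hcont ?_
      unfold B0l
      exact isClosed_closure
    have hsub : BH.mult ⊆ {B : H →L[ℂ] H | S.comp B ∈ B0l (H := H) (K := K) BK.mult} := by
      rw [BanachXModuleCb.mult]
      apply closure_minimal _ hcl
      rintro B ⟨φ, hφ, rfl⟩
      exact left_core BH BK S C hC φ hφ
    exact hsub hA
  · intro A hA
    have hcont : Continuous fun B : K →L[ℂ] K => B.comp S := by
      have he : (fun B : K →L[ℂ] K => B.comp S)
          = ⇑(((ContinuousLinearMap.compL ℂ H K K).flip) S) := by
        funext B; simp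
      rw [he]; exact ContinuousLinearMap.continuous _
    have hcl : IsClosed {B : K →L[ℂ] K | B.comp S ∈ B0r (H := H) (K := K) BH.mult} := by
      have he : {B : K →L[ℂ] K | B.comp S ∈ B0r (H := H) (K := K) BH.mult}
          = (fun B : K →L[ℂ] K => B.comp S) ⁻¹' (B0r BH.mult) := rfl
      rw [he]
      refine IsClosed.preimage hcont ?_
      unfold B0r
      exact isClosed_closure
    have hsub : BK.mult ⊆ {B : K →L[ℂ] K | B.comp S ∈ B0r (H := H) (K := K) BH.mult} := by
      rw [BanachXModuleCb.mult]
      apply closure_minimal _ hcl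
      rintro B ⟨φ, hφ, rfl⟩
      exact right_core BH BK S C hC φ hφ
    exact hsub hA


end
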